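/- If a pinwheel instance A containing two jobs with the same period 2k (for a positive integer k) is such that the instance obtained by replacing those two jobs with a single job of period k is schedulable, then A is schedulable. -/

import Mathlib

/-- A schedule for a pinwheel instance (list of periods) is valid if every job `i`
appears in every window of `a_i` consecutive days. -/
def Valid (a : List ℕ) (f : ℕ → Fin a.length) : Prop :=
  ∀ (i : Fin a.length) (t : ℕ), ∃ s, t ≤ s ∧ s < t + a.get i ∧ f s = i

/-- A pinwheel instance is schedulable if a valid schedule exists. -/
def Schedulable (a : List ℕ) : Prop := ∃ f, Valid a f

/-- Density of a pinwheel instance: sum of reciprocals of the periods. -/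
noncomputable def density (a : List ℕ) : ℝ := (a.map fun x => (1:ℝ)/x).sum

theorem stmt_5 (A : List ℕ) (k : ℕ) (hk : 0 < k)
    (h : Schedulable (k :: A)) : Schedulable (2 * k :: 2 * k :: A) := by
  classical
  obtain ⟨f, hf⟩ := h
  have z : Fin (k :: A).length := ⟨0, Nat.succ_pos _⟩
  set z : Fin (k :: A).length := ⟨0, Nat.succ_pos _⟩ with hz
  let c : ℕ → ℕ := fun s => ((Finset.range s).filter (fun u => f u = z)).card
  let g : ℕ → Fin (2*k :: 2*k :: A).length := fun s =>
    if f s = z then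
      (if c s % 2 = 0 then ⟨0, Nat.succ_pos _⟩ else ⟨1, by simp⟩)
    else ⟨(f s).val + 1, by have := (f s).isLt; simp at this ⊢; omega⟩
  refine ⟨g, ?_⟩
  intro i t
  have hgetz : (k :: A).get z = k := rfl
  by_cases hi2 : 2 ≤ i.val
  · -- old index
    have hlt : i.val - 1 < (k :: A).length := by
      have := i.isLt
      simp only [List.length_cons] at this ⊢
      omega
    obtain ⟨s, hts, hslt, hfs⟩ := hf ⟨i.val - 1, hlt⟩ t
    have hget : (2*k :: 2*k :: A).get i = (k :: A).get ⟨i.val - 1, hlt⟩ := by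
      rcases i with ⟨iv, hiv⟩
      match iv, hiv with
      | (m+2), hiv => simp [List.get]
    refine ⟨s, hts, by rw [hget]; exact hslt, ?_⟩
    have hfsz : ¬ (f s = z) := by
      rw [hfs, hz]; intro hc
      have := congrArg Fin.val hc
      simp at this; omega
    show g s = i
    simp only [g, if_neg hfsz, hfs]
    apply Fin.ext
    simp; omega
  · -- i.val = 0 or 1
    obtain ⟨s1, hts1, hs1lt, hfs1⟩ := hf z t
    rw [hgetz] at hs1lt
    obtain ⟨w, hw1, hw2, hw3⟩ := hf z (s1+1)
    rw [hgetz] at hw2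
    have hP : ∃ m, f (s1+1+m) = z := ⟨w - (s1+1), by rwa [Nat.add_sub_cancel' hw1]⟩
    set n0 := Nat.find hP with hn0
    set s2 := s1 + 1 + n0 with hs2
    have hfs2 : f s2 = z := Nat.find_spec hP
    have hn0le : n0 ≤ w - (s1+1) := Nat.find_min' hP (by rwa [Nat.add_sub_cancel' hw1])
    have hs2lt : s2 < s1 + 1 + k := by omega
    have hcs2 : c s2 = c s1 + 1 := by
      have hset : (Finset.range s2).filter (fun u => f u = z)
          = insert s1 ((Finset.range s1).filter (fun u => f u = z)) := by
        ext u
        simp only [Finset.mem_filter, Finset.mem_insert, Finset.mem_range]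
        constructor
        · rintro ⟨hu, hfu⟩
          rcases lt_trichotomy u s1 with h' | h' | h'
          · exact Or.inr ⟨h', hfu⟩
          · exact Or.inl h'
          · exfalso
            have hm : u = s1 + 1 + (u - (s1+1)) := by omega
            have := Nat.find_min hP (m := u - (s1+1)) (by omega)
            rw [← hm] at this
            exact this hfu
        · rintro (rfl | ⟨hu, hfu⟩)
          · exact ⟨by omega, hfs1⟩
          · exact ⟨by omega, hfu⟩
      show ((Finset.range s2).filter (fun u => f u = z)).card = _
      rw [hset, Finset.card_insert_of_notMem (by simp)]
    have hiv : i.val = 0 ∨ i.val = 1 := by omega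
    have hget : (2*k :: 2*k :: A).get i = 2 * k := by
      rcases i with ⟨iv, hlt'⟩
      rcases hiv with h' | h' <;> subst h' <;> rfl
    rw [hget]
    have hgs1 : g s1 = if c s1 % 2 = 0 then ⟨0, Nat.succ_pos _⟩ else ⟨1, by simp⟩ := by
      simp only [g, if_pos hfs1]
    have hgs2 : g s2 = if c s1 % 2 = 0 then ⟨1, by simp⟩ else ⟨0, Nat.succ_pos _⟩ := by
      simp only [g, if_pos hfs2, hcs2]
      rcases Nat.even_or_odd (c s1) with he | ho
      · have h1 : c s1 % 2 = 0 := Nat.even_iff.mp he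
        have h2 : (c s1 + 1) % 2 = 1 := by omega
        simp [h1, h2]
      · have h1 : c s1 % 2 = 1 := Nat.odd_iff.mp ho
        have h2 : (c s1 + 1) % 2 = 0 := by omega
        simp [h1, h2]
    rcases hiv with h01 | h01
    · -- i = 0
      have hi : i = ⟨0, Nat.succ_pos _⟩ := Fin.ext h01
      by_cases hp : c s1 % 2 = 0
      · exact ⟨s1, hts1, by omega, by rw [hgs1, if_pos hp, hi]⟩
      · exact ⟨s2, by omega, by omega, by rw [hgs2, if_neg hp, hi]⟩
    · have hi : i = ⟨1, by simp⟩ := Fin.ext h01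
      by_cases hp : c s1 % 2 = 0
      · exact ⟨s2, by omega, by omega, by rw [hgs2, if_pos hp, hi]⟩
      · exact ⟨s1, hts1, by omega, by rw [hgs1, if_neg hp, hi]⟩
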